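/- Let k ≥ 1 be an integer and let x ∈ ℤ_{≥0}^E be a nonnegative integral vector on the edges of a bipartite graph G = (V,E) with bipartition into V^t and V^a-side constraints: x(δ(v)) = k for all v ∈ V^t. Then (by de Werra's balanced edge-colouring theorem, which may be assumed) x can be written as x¹ + ⋯ + x^k with each x^i ∈ ℤ_{≥0}^E satisfying x^i(δ(v)) = 1 for all v ∈ V^t and ⌊x(δ(v))/k⌋ ≤ x^i(δ(v)) ≤ ⌈x(δ(v))/k⌉ for all v ∈ V^a. Consequently, the polytope P = {x ∈ ℝ^E : x ≥ 0; x(δ(v)) = 1 ∀v ∈ V^t; x(δ(v)) ≥ 1 ∀v ∈ V^a} has the integer decomposition property: every integral point of kP is a sum of k integral points of P. -/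

import Mathlib

open scoped Classical

noncomputable section

variable {V E : Type*}

/-- The edges incident to `v`, for a graph given by two endpoint maps. -/
def deltaE [Fintype E] [DecidableEq V] (ep₁ ep₂ : E → V) (v : V) : Finset E :=
  Finset.univ.filter (fun e => ep₁ e = v ∨ ep₂ e = v)

/-- `scaleSet k P` is the set `kP` of sums `∑ λ_p • p` over finitely many points of `P`
with `λ ≥ 0` and `∑ λ_p = k`. -/
def scaleSet (k : ℝ) (P : Set (E → ℝ)) : Set (E → ℝ) :=
  {x | ∃ (s : Finset (E → ℝ)) (c : (E → ℝ) → ℝ),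
    (↑s ⊆ P) ∧ (∀ p, 0 ≤ c p) ∧ (∑ p ∈ s, c p = k) ∧ x = ∑ p ∈ s, c p • p}

theorem stmt18 [Fintype V] [Fintype E] [DecidableEq V]
    (Vt Va : Finset V) (hcover : Vt ∪ Va = Finset.univ) (hdisj : Disjoint Vt Va)
    (ep₁ ep₂ : E → V) (hep₁ : ∀ e, ep₁ e ∈ Vt) (hep₂ : ∀ e, ep₂ e ∈ Va)
    -- de Werra's balanced edge-colouring theorem, assumed as a hypothesis
    (hdW : ∀ k : ℕ, 1 ≤ k → ∀ x : E → ℤ, (∀ e, 0 ≤ x e) →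
      (∀ v ∈ Vt, ∑ e ∈ deltaE ep₁ ep₂ v, x e = (k : ℤ)) →
      ∃ f : Fin k → E → ℤ, (∀ i e, 0 ≤ f i e) ∧ x = ∑ i, f i ∧
        (∀ i, ∀ v ∈ Vt, ∑ e ∈ deltaE ep₁ ep₂ v, f i e = 1) ∧
        (∀ i, ∀ v ∈ Va,
          (∑ e ∈ deltaE ep₁ ep₂ v, x e) / (k : ℤ) ≤ ∑ e ∈ deltaE ep₁ ep₂ v, f i e ∧
          ∑ e ∈ deltaE ep₁ ep₂ v, f i e ≤ ((∑ e ∈ deltaE ep₁ ep₂ v, x e) + k - 1) / (k : ℤ))) :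
    -- consequently, the polytope `P` has the integer decomposition property
    let P : Set (E → ℝ) := {x | (∀ e, 0 ≤ x e) ∧
      (∀ v ∈ Vt, ∑ e ∈ deltaE ep₁ ep₂ v, x e = 1) ∧
      (∀ v ∈ Va, 1 ≤ ∑ e ∈ deltaE ep₁ ep₂ v, x e)}
    ∀ k : ℕ, 1 ≤ k → ∀ x : E → ℤ,
      (fun e => (x e : ℝ)) ∈ scaleSet (k : ℝ) P →
      ∃ g : Fin k → E → ℤ, (∀ i, (fun e => (g i e : ℝ)) ∈ P) ∧ x = ∑ i, g i := by
  intro P k hk x hx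
  obtain ⟨s, c, hsP, hc0, hcsum, hxe⟩ := hx
  have hkpos : (0 : ℤ) < (k : ℤ) := by exact_mod_cast hk
  have hxval : ∀ e, (x e : ℝ) = ∑ p ∈ s, c p * p e := by
    intro e
    have := congrFun hxe e
    simpa [Finset.sum_apply] using this
  -- nonnegativity of x
  have hx0 : ∀ e, 0 ≤ x e := by
    intro e
    have : (0 : ℝ) ≤ (x e : ℝ) := by
      rw [hxval e]
      exact Finset.sum_nonneg fun p hp => mul_nonneg (hc0 p) ((hsP hp).1 e)
    exact_mod_cast this
  -- sums over δ(v)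
  have hsum : ∀ v, ∑ e ∈ deltaE ep₁ ep₂ v, (x e : ℝ)
      = ∑ p ∈ s, c p * ∑ e ∈ deltaE ep₁ ep₂ v, p e := by
    intro v
    simp only [hxval, Finset.mul_sum]
    exact Finset.sum_comm
  -- Vt constraint: x(δ v) = k
  have hVt : ∀ v ∈ Vt, ∑ e ∈ deltaE ep₁ ep₂ v, x e = (k : ℤ) := by
    intro v hv
    have : (↑(∑ e ∈ deltaE ep₁ ep₂ v, x e) : ℝ) = (k : ℝ) := by
      push_cast
      rw [hsum v]
      calc ∑ p ∈ s, c p * ∑ e ∈ deltaE ep₁ ep₂ v, p e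
          = ∑ p ∈ s, c p := by
            refine Finset.sum_congr rfl fun p hp => ?_
            rw [(hsP hp).2.1 v hv, mul_one]
        _ = (k : ℝ) := hcsum
    exact_mod_cast this
  -- Va constraint: x(δ v) ≥ k
  have hVa : ∀ v ∈ Va, (k : ℤ) ≤ ∑ e ∈ deltaE ep₁ ep₂ v, x e := by
    intro v hv
    have : (k : ℝ) ≤ (↑(∑ e ∈ deltaE ep₁ ep₂ v, x e) : ℝ) := by
      push_cast
      rw [hsum v, ← hcsum]
      refine Finset.sum_le_sum fun p hp => ?_
      have h1 := (hsP hp).2.2 v hv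
      nlinarith [hc0 p, h1]
    exact_mod_cast this
  obtain ⟨f, hf0, hfsum, hfVt, hfVa⟩ := hdW k hk x hx0 hVt
  refine ⟨f, fun i => ?_, hfsum⟩
  refine ⟨fun e => show (0:ℝ) ≤ ((f i e : ℤ) : ℝ) by exact_mod_cast hf0 i e, fun v hv => ?_, fun v hv => ?_⟩
  · have := hfVt i v hv
    beta_reduce
    exact_mod_cast this
  · have h1 := (hfVa i v hv).1
    have h2 : (1 : ℤ) ≤ (∑ e ∈ deltaE ep₁ ep₂ v, x e) / (k : ℤ) :=
      (Int.le_ediv_iff_mul_le hkpos).2 (by simpa using hVa v hv)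
    have : (1 : ℤ) ≤ ∑ e ∈ deltaE ep₁ ep₂ v, f i e := le_trans h2 h1
    beta_reduce
    exact_mod_cast this
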